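/- If A is a Gelfand ring with only finitely many maximal ideals, then A is canonically isomorphic to the product ∏_{𝔪 ∈ Max(A)} A_𝔪; in particular, A is a clean ring. -/

import Mathlib

theorem gelfand_finitely_many_maximals_product_local (A : Type*) [CommRing A]
    (hG : ∀ p : Ideal A, p.IsPrime → ∃! m : Ideal A, m.IsMaximal ∧ p ≤ m)
    (hfin : Finite {m : Ideal A // m.IsMaximal}) :
    Function.Bijective
        (fun (a : A) (m : {m : Ideal A // m.IsMaximal}) =>
          algebraMap A (Localization (@Ideal.primeCompl A _ m.1 m.2.isPrime)) a) ∧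
      ∀ a : A, ∃ e u : A, IsIdempotentElem e ∧ IsUnit u ∧ a = e + u := by
  classical
  have := Fintype.ofFinite {m : Ideal A // m.IsMaximal}
  set M := {m : Ideal A // m.IsMaximal} with hMdef
  let P : M → Submonoid A := fun m => @Ideal.primeCompl A _ m.1 m.2.isPrime
  let L : M → Type _ := fun m => Localization (P m)
  let φ : ∀ m : M, A →+* L m := fun m => algebraMap A (L m)
  haveI : ∀ m : M, (m.1 : Ideal A).IsPrime := fun m => m.2.isPrime
  -- Gelfand pair property
  have hpair : ∀ m n : M, m ≠ n → ∃ a ∈ P m, ∃ b ∈ P n, a * b = 0 := by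
    intro m n hmn
    by_contra h
    push_neg at h
    have hdisj : Disjoint ((⊥ : Ideal A) : Set A) ((P m ⊔ P n : Submonoid A) : Set A) := by
      rw [Set.disjoint_left]
      intro x hx hx'
      rw [SetLike.mem_coe, Ideal.mem_bot] at hx
      subst hx
      obtain ⟨a, ha, b, hb, hab⟩ := Submonoid.mem_sup.mp hx'
      exact h a ha b hb hab
    obtain ⟨p, hp, -, hpd⟩ := Ideal.exists_le_prime_disjoint _ _ hdisj
    have hpm : p ≤ m.1 := by
      intro x hx
      by_contra hxm
      exact Set.disjoint_left.mp hpd hx (Submonoid.mem_sup_left hxm)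
    have hpn : p ≤ n.1 := by
      intro x hx
      by_contra hxn
      exact Set.disjoint_left.mp hpd hx (Submonoid.mem_sup_right hxn)
    obtain ⟨q, -, huniq⟩ := hG p hp
    exact hmn (Subtype.ext ((huniq m.1 ⟨m.2, hpm⟩).trans (huniq n.1 ⟨n.2, hpn⟩).symm))
  -- elements vanishing at one localization, invertible image at another
  have hg' : ∀ m n : M, m ≠ n → ∃ a : A, a ∈ P m ∧ φ n a = 0 := by
    intro m n hmn
    obtain ⟨a, ha, b, hb, hab⟩ := hpair m n hmn
    refine ⟨a, ha, ?_⟩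
    rw [show φ n a = algebraMap A (L n) a from rfl, IsLocalization.map_eq_zero_iff (P n)]
    exact ⟨⟨b, hb⟩, by rw [mul_comm]; exact hab⟩
  choose g hg1 hg2 using hg'
  let f : M → A := fun i => ∏ j : M, if h : i = j then 1 else g i j h
  have hf1 : ∀ i : M, f i ∈ P i := by
    intro i
    refine Submonoid.prod_mem _ fun j _ => ?_
    by_cases h : i = j
    · rw [dif_pos h]; exact (P i).one_mem
    · rw [dif_neg h]; exact hg1 i j h
  have hf2 : ∀ i j : M, i ≠ j → φ j (f i) = 0 := by
    intro i j hij
    rw [show f i = ∏ k : M, if h : i = k then 1 else g i k h from rfl, map_prod]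
    refine Finset.prod_eq_zero (Finset.mem_univ j) ?_
    rw [dif_neg hij]
    exact hg2 i j hij
  -- units are detected locally
  have hunit : ∀ a : A, (∀ i : M, IsUnit (φ i a)) → IsUnit a := by
    intro a ha
    by_contra hna
    obtain ⟨m, hm, hsm⟩ := Ideal.exists_le_maximal _
      ((Ideal.span_singleton_eq_top (x := a)).not.mpr hna)
    have := (IsLocalization.AtPrime.isUnit_to_map_iff (L ⟨m, hm⟩) m a).mp (ha ⟨m, hm⟩)
    exact this (hsm (Ideal.subset_span rfl))
  -- the sum of the f i is a unit
  have hφs : ∀ i : M, φ i (∑ j : M, f j) = φ i (f i) := by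
    intro i
    rw [map_sum]
    refine Finset.sum_eq_single i (fun j _ hji => hf2 j i hji)
      (fun h => absurd (Finset.mem_univ i) h)
  have hfunit : ∀ i : M, IsUnit (φ i (f i)) := fun i =>
    (IsLocalization.AtPrime.isUnit_to_map_iff (L i) i.1 (f i)).mpr (hf1 i)
  have hs : IsUnit (∑ j : M, f j) := hunit _ fun i => (hφs i) ▸ hfunit i
  -- idempotent-like elements
  let e : M → A := fun i => f i * ↑hs.unit⁻¹
  have he : ∀ i j : M, φ j (e i) = if i = j then 1 else 0 := by
    intro i j
    by_cases h : i = j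
    · subst h
      rw [if_pos rfl]
      have : φ i (e i) = φ i ((∑ j : M, f j) * ↑hs.unit⁻¹) := by
        rw [show e i = f i * ↑hs.unit⁻¹ from rfl, map_mul, map_mul, hφs]
      rw [this, show (∑ j : M, f j) * ↑hs.unit⁻¹ = 1 from hs.mul_val_inv, map_one]
    · rw [if_neg h, show e i = f i * ↑hs.unit⁻¹ from rfl, map_mul, hf2 i j h, zero_mul]
  -- injectivity
  have hinj : Function.Injective
      (fun (a : A) (m : M) => algebraMap A (Localization (P m)) a) := by
    intro a b hab
    have hz : ∀ i : M, φ i (a - b) = 0 := fun i => by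
      have h' : φ i a = φ i b := congrFun hab i
      rw [map_sub, h', sub_self]
    rw [← sub_eq_zero]
    by_contra hne
    have hIne : Ideal.torsionOf A A (a - b) ≠ ⊤ := by
      intro hI
      have h1 : (1 : A) ∈ Ideal.torsionOf A A (a - b) := hI ▸ Submodule.mem_top
      rw [Ideal.mem_torsionOf_iff, one_smul] at h1
      exact hne h1
    obtain ⟨m, hm, hIm⟩ := Ideal.exists_le_maximal _ hIne
    obtain ⟨⟨t, ht⟩, htc⟩ := (IsLocalization.map_eq_zero_iff (P ⟨m, hm⟩) _ (a - b)).mp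
      (hz ⟨m, hm⟩)
    exact ht (hIm ((Ideal.mem_torsionOf_iff _ _).mpr (by simpa [smul_eq_mul] using htc)))
  -- surjectivity
  have hsurj : Function.Surjective
      (fun (a : A) (m : M) => algebraMap A (Localization (P m)) a) := by
    intro x
    choose r t hrt using fun i : M => (by
      obtain ⟨⟨r, t⟩, h⟩ := IsLocalization.mk'_surjective (P i) (x i)
      exact ⟨r, t, h⟩ : ∃ (r : A) (t : P i), IsLocalization.mk' (L i) r t = x i)
    let u : M → A := fun i => (t i : A) * e i + (1 - e i)
    have hu : ∀ i j : M, φ j (u i) = if i = j then φ j (t i : A) else 1 := by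
      intro i j
      rw [show u i = (t i : A) * e i + (1 - e i) from rfl, map_add, map_mul, map_sub,
        map_one, he]
      by_cases h : i = j
      · rw [if_pos h, if_pos h]; ring
      · rw [if_neg h, if_neg h]; ring
    have huu : ∀ i : M, IsUnit (u i) := by
      intro i
      refine hunit _ fun j => ?_
      rw [hu]
      by_cases h : i = j
      · rw [if_pos h]
        subst h
        exact IsLocalization.map_units (L i) (t i)
      · rw [if_neg h]; exact isUnit_one
    refine ⟨∑ i : M, r i * e i * ↑(huu i).unit⁻¹, funext fun j => ?_⟩
    show φ j (∑ i : M, r i * e i * ↑(huu i).unit⁻¹) = x j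
    have hcan : IsUnit (φ j (t j : A)) := IsLocalization.map_units (L j) (t j)
    refine hcan.mul_right_cancel ?_
    have h1 : φ j (∑ i : M, r i * e i * ↑(huu i).unit⁻¹) =
        φ j (r j) * φ j ↑(huu j).unit⁻¹ := by
      rw [map_sum]
      rw [Finset.sum_eq_single j (fun i _ hij => by
        rw [map_mul, map_mul, he, if_neg hij, mul_zero, zero_mul])
        (fun h => absurd (Finset.mem_univ j) h)]
      rw [map_mul, map_mul, he, if_pos rfl, mul_one]
    have h2 : φ j ↑(huu j).unit⁻¹ * φ j (t j : A) = 1 := by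
      have : φ j (t j : A) = φ j (u j) := by rw [hu, if_pos rfl]
      rw [this, ← map_mul, IsUnit.val_inv_mul, map_one]
    have h3 : x j * φ j (t j : A) = φ j (r j) := by
      rw [← hrt j]
      exact IsLocalization.mk'_spec (L j) (r j) (t j)
    rw [h1, h3, mul_assoc, h2, mul_one]
  refine ⟨⟨hinj, hsurj⟩, ?_⟩
  -- cleanness
  intro a
  obtain ⟨e₀, he₀⟩ := hsurj (fun i : M => if a ∈ i.1 then (1 : L i) else 0)
  have he₀' : ∀ i : M, φ i e₀ = if a ∈ i.1 then 1 else 0 := fun i => congrFun he₀ i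
  have hidem : IsIdempotentElem e₀ := by
    refine hinj (funext fun i => ?_)
    show φ i (e₀ * e₀) = φ i e₀
    rw [map_mul, he₀']
    by_cases h : a ∈ i.1 <;> simp [h]
  have hun : IsUnit (a - e₀) := by
    refine hunit _ fun i => ?_
    rw [map_sub, he₀']
    by_cases h : a ∈ i.1
    · rw [if_pos h]
      have hna : ¬IsUnit (φ i a) := by
        intro hua
        exact ((IsLocalization.AtPrime.isUnit_to_map_iff (L i) i.1 a).mp hua) h
      have : IsUnit (1 - φ i a) :=
        IsLocalRing.isUnit_one_sub_self_of_mem_nonunits _ hna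
      simpa [neg_sub] using this.neg
    · rw [if_neg h, sub_zero]
      exact (IsLocalization.AtPrime.isUnit_to_map_iff (L i) i.1 a).mpr h
  exact ⟨e₀, a - e₀, hidem, hun, by ring⟩
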